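/- In the Tits extension W̃ of a Weyl group W of a symmetrizable Kac–Moody algebra, the abelian subgroup Z generated by the elements s̃_i² is isomorphic as a W-module to Q^∨/2Q^∨ ≅ (ℤ/2ℤ)^{|I|}, where Q^∨ is the coroot lattice; in particular each s̃_i² has order exactly 2 and the s̃_i² generate a group of order 2^{|I|}. -/

import Mathlib

/-- The alternating word `s_i s_j s_i ⋯` of length `m` in the free group. -/
def altWord {ι : Type*} (i j : ι) : ℕ → FreeGroup ι
  | 0 => 1
  | (m + 1) => FreeGroup.of i * altWord j i m

/-- The Coxeter exponent `m_{ij} ∈ {2,3,4,6,∞}` (with `0` encoding `∞`). -/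
def coxExp {ι : Type*} (A : ι → ι → ℤ) (i j : ι) : ℕ :=
  if A i j * A j i = 0 then 2
  else if A i j * A j i = 1 then 3
  else if A i j * A j i = 2 then 4
  else if A i j * A j i = 3 then 6
  else 0

/-- Relators of the Tits extension `W̃`. -/
def titsRels {ι : Type*} (A : ι → ι → ℤ) : Set (FreeGroup ι) :=
  {r | (∃ i j, i ≠ j ∧ coxExp A i j ≠ 0 ∧
          r = altWord i j (coxExp A i j) * (altWord j i (coxExp A i j))⁻¹)
     ∨ (∃ i, r = (FreeGroup.of i) ^ 4)
     ∨ (∃ i j, r = (FreeGroup.of i) ^ 2 * (FreeGroup.of j) ^ 2 *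
          ((FreeGroup.of j) ^ 2 * (FreeGroup.of i) ^ 2)⁻¹)
     ∨ (∃ i j, i ≠ j ∧
          r = FreeGroup.of i * (FreeGroup.of j) ^ 2 * (FreeGroup.of i)⁻¹ *
            ((FreeGroup.of j) ^ 2 * ((FreeGroup.of i) ^ 2) ^ (-(A j i)))⁻¹)}

/-- `A` is a generalised (symmetrizable) Cartan matrix. -/
def IsGCM {ι : Type*} (A : ι → ι → ℤ) : Prop :=
  (∀ i, A i i = 2) ∧ (∀ i j, i ≠ j → A i j ≤ 0) ∧ (∀ i j, A i j = 0 → A j i = 0)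

namespace TitsAux

variable {ι : Type*}

/-- The reflection `s_j` acting on weights recorded by coroot pairings. -/
def rA (A : ι → ι → ℤ) (j : ι) (l : ι → ℤ) : ι → ℤ := fun k => l k - l j * A k j

/-- Mod 2 sign cocycle. -/
def hh (p : ℤ) : ZMod 2 := ((max p 0 : ℤ) : ZMod 2)

lemma rA_rA (A : ι → ι → ℤ) {j : ι} (h2 : A j j = 2) (l : ι → ℤ) :
    rA A j (rA A j l) = l := by
  funext k; simp only [rA]; rw [h2]; ring

/-- The permutation modelling `s̃_j` on extremal weight vectors. -/
def tE (A : ι → ι → ℤ) (j : ι) (h2 : A j j = 2) : Equiv.Perm ((ι → ℤ) × ZMod 2) where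
  toFun := fun p => (rA A j p.1, p.2 + hh (p.1 j))
  invFun := fun p => (rA A j p.1, p.2 - hh (rA A j p.1 j))
  left_inv := by intro p; simp only [rA_rA A h2]; simp
  right_inv := by intro p; simp only [rA_rA A h2]; simp

lemma tE_apply (A : ι → ι → ℤ) (j : ι) (h2 : A j j = 2) (p) :
    tE A j h2 p = (rA A j p.1, p.2 + hh (p.1 j)) := rfl

lemma tE_inv_apply (A : ι → ι → ℤ) (j : ι) (h2 : A j j = 2) (p) :
    (tE A j h2)⁻¹ p = (rA A j p.1, p.2 - hh (rA A j p.1 j)) := rfl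

lemma z2 (c : ZMod 2) : c + c = 0 := by revert c; decide

lemma castEq (a b : ℤ) (h : (2:ℤ) ∣ a - b) : (a : ZMod 2) = b := by
  have := (ZMod.intCast_zmod_eq_zero_iff_dvd (a - b) 2).2 h
  push_cast at this
  linear_combination this

lemma eps21 (e : ZMod 2) (a1 a2 b1 : ℤ) (h : (2:ℤ) ∣ a1 + a2 - b1) :
    e + (a1 : ZMod 2) + a2 = e + b1 := by
  have := castEq _ _ h; push_cast at this; linear_combination this

lemma eps2 (e : ZMod 2) (a1 a2 b1 b2 : ℤ) (h : (2:ℤ) ∣ a1 + a2 - (b1 + b2)) :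
    e + (a1 : ZMod 2) + a2 = e + b1 + b2 := by
  have := castEq _ _ h; push_cast at this; linear_combination this

lemma eps3 (e : ZMod 2) (a1 a2 a3 b1 b2 b3 : ℤ) (h : (2:ℤ) ∣ a1 + a2 + a3 - (b1 + b2 + b3)) :
    e + (a1 : ZMod 2) + a2 + a3 = e + b1 + b2 + b3 := by
  have := castEq _ _ h; push_cast at this; linear_combination this

lemma eps4 (e : ZMod 2) (a1 a2 a3 a4 b1 b2 b3 b4 : ℤ)
    (h : (2:ℤ) ∣ a1 + a2 + a3 + a4 - (b1 + b2 + b3 + b4)) :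
    e + (a1 : ZMod 2) + a2 + a3 + a4 = e + b1 + b2 + b3 + b4 := by
  have := castEq _ _ h; push_cast at this; linear_combination this

lemma eps6 (e : ZMod 2) (a1 a2 a3 a4 a5 a6 b1 b2 b3 b4 b5 b6 : ℤ)
    (h : (2:ℤ) ∣ a1 + a2 + a3 + a4 + a5 + a6 - (b1 + b2 + b3 + b4 + b5 + b6)) :
    e + (a1 : ZMod 2) + a2 + a3 + a4 + a5 + a6 = e + b1 + b2 + b3 + b4 + b5 + b6 := by
  have := castEq _ _ h; push_cast at this; linear_combination this

lemma tE_sq_apply (A : ι → ι → ℤ) (i : ι) (h2 : A i i = 2) (p) :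
    ((tE A i h2) ^ 2) p = (p.1, p.2 + ((p.1 i : ℤ) : ZMod 2)) := by
  obtain ⟨l, e⟩ := p
  rw [pow_two]
  simp only [Equiv.Perm.mul_apply, tE_apply, rA_rA A h2, Prod.mk.injEq]
  refine ⟨by trivial, ?_⟩
  simp only [hh, rA, h2]
  exact eps21 e _ _ _ (by omega)

lemma tE_sq_sq (A : ι → ι → ℤ) (i : ι) (h2 : A i i = 2) :
    ((tE A i h2) ^ 2) ^ 2 = 1 := by
  ext p : 1
  rw [pow_two]
  simp only [Equiv.Perm.mul_apply, tE_sq_apply, Equiv.Perm.one_apply]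
  rw [add_assoc, z2, add_zero]

lemma tE_sq_zpow (A : ι → ι → ℤ) (i : ι) (h2 : A i i = 2) (n : ℤ) (p) :
    (((tE A i h2) ^ 2) ^ n) p = (p.1, p.2 + (n : ZMod 2) * ((p.1 i : ℤ) : ZMod 2)) := by
  have h20 : (2 : ZMod 2) = 0 := by decide
  have key : (tE A i h2 ^ 2) ^ (2:ℤ) = 1 := by
    rw [show (2:ℤ) = ((2:ℕ):ℤ) by norm_num, zpow_natCast, tE_sq_sq]
  rcases Int.even_or_odd n with ⟨k, hk⟩ | ⟨k, hk⟩
  · have hn : n = 2 * k := by omega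
    have hz : ((n : ZMod 2)) = 0 := by rw [hn]; push_cast; rw [h20]; ring
    rw [hz, zero_mul, add_zero, hn, zpow_mul, key, one_zpow, Equiv.Perm.one_apply]
  · have hn : n = 2 * k + 1 := by omega
    have hz : ((n : ZMod 2)) = 1 := by rw [hn]; push_cast; rw [h20]; ring
    rw [hz, one_mul, hn, zpow_add, zpow_mul, key, one_zpow, one_mul, zpow_one,
      tE_sq_apply]

section Braid
variable (A : ι → ι → ℤ) (hA : IsGCM A) (i j : ι)

lemma braid0 (ha : A i j = 0) (hb : A j i = 0) :
    FreeGroup.lift (fun k => tE A k (hA.1 k)) (altWord i j 2) = FreeGroup.lift (fun k => tE A k (hA.1 k)) (altWord j i 2) := by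
  have e1 : altWord i j 2 = FreeGroup.of i * (FreeGroup.of j * 1) := rfl
  have e2 : altWord j i 2 = FreeGroup.of j * (FreeGroup.of i * 1) := rfl
  rw [e1, e2]
  simp only [map_mul, map_one, FreeGroup.lift_apply_of, mul_one]
  ext ⟨l, e⟩ : 1
  simp only [Equiv.Perm.mul_apply, tE_apply, Prod.mk.injEq]
  refine ⟨?_, ?_⟩
  · funext k
    simp only [rA, ha, hb, hA.1 i, hA.1 j]
    ring
  · simp only [hh, rA, ha, hb, hA.1 i, hA.1 j]
    exact eps2 e _ _ _ _ (by omega)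

lemma braid1 (ha : A i j = -1) (hb : A j i = -1) :
    FreeGroup.lift (fun k => tE A k (hA.1 k)) (altWord i j 3) = FreeGroup.lift (fun k => tE A k (hA.1 k)) (altWord j i 3) := by
  have e1 : altWord i j 3 = FreeGroup.of i * (FreeGroup.of j * (FreeGroup.of i * 1)) := rfl
  have e2 : altWord j i 3 = FreeGroup.of j * (FreeGroup.of i * (FreeGroup.of j * 1)) := rfl
  rw [e1, e2]
  simp only [map_mul, map_one, FreeGroup.lift_apply_of, mul_one]
  ext ⟨l, e⟩ : 1
  simp only [Equiv.Perm.mul_apply, tE_apply, Prod.mk.injEq]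
  refine ⟨?_, ?_⟩
  · funext k
    simp only [rA, ha, hb, hA.1 i, hA.1 j]
    ring
  · simp only [hh, rA, ha, hb, hA.1 i, hA.1 j]
    exact eps3 e _ _ _ _ _ _ (by omega)

lemma braid2 (ha : A i j = -1) (hb : A j i = -2) :
    FreeGroup.lift (fun k => tE A k (hA.1 k)) (altWord i j 4) = FreeGroup.lift (fun k => tE A k (hA.1 k)) (altWord j i 4) := by
  have e1 : altWord i j 4 =
      FreeGroup.of i * (FreeGroup.of j * (FreeGroup.of i * (FreeGroup.of j * 1))) := rfl
  have e2 : altWord j i 4 =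
      FreeGroup.of j * (FreeGroup.of i * (FreeGroup.of j * (FreeGroup.of i * 1))) := rfl
  rw [e1, e2]
  simp only [map_mul, map_one, FreeGroup.lift_apply_of, mul_one]
  ext ⟨l, e⟩ : 1
  simp only [Equiv.Perm.mul_apply, tE_apply, Prod.mk.injEq]
  refine ⟨?_, ?_⟩
  · funext k
    simp only [rA, ha, hb, hA.1 i, hA.1 j]
    ring
  · simp only [hh, rA, ha, hb, hA.1 i, hA.1 j]
    exact eps4 e _ _ _ _ _ _ _ _ (by omega)

lemma braid3 (ha : A i j = -1) (hb : A j i = -3) :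
    FreeGroup.lift (fun k => tE A k (hA.1 k)) (altWord i j 6) = FreeGroup.lift (fun k => tE A k (hA.1 k)) (altWord j i 6) := by
  have e1 : altWord i j 6 =
      FreeGroup.of i * (FreeGroup.of j * (FreeGroup.of i * (FreeGroup.of j *
        (FreeGroup.of i * (FreeGroup.of j * 1))))) := rfl
  have e2 : altWord j i 6 =
      FreeGroup.of j * (FreeGroup.of i * (FreeGroup.of j * (FreeGroup.of i *
        (FreeGroup.of j * (FreeGroup.of i * 1))))) := rfl
  rw [e1, e2]
  simp only [map_mul, map_one, FreeGroup.lift_apply_of, mul_one]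
  ext ⟨l, e⟩ : 1
  simp only [Equiv.Perm.mul_apply, tE_apply, Prod.mk.injEq]
  refine ⟨?_, ?_⟩
  · funext k
    simp only [rA, ha, hb, hA.1 i, hA.1 j]
    ring
  · simp only [hh, rA, ha, hb, hA.1 i, hA.1 j]
    exact eps6 e _ _ _ _ _ _ _ _ _ _ _ _ (by omega)

end Braid

lemma lift_rels (A : ι → ι → ℤ) (hA : IsGCM A) :
    ∀ r ∈ titsRels A, FreeGroup.lift (fun k => tE A k (hA.1 k)) r = 1 := by
  intro r hr
  rcases hr with ⟨i, j, hij, hm, rfl⟩ | ⟨i, rfl⟩ | ⟨i, j, rfl⟩ | ⟨i, j, hij, rfl⟩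
  · -- braid relators
    have h1 : A i j ≤ 0 := hA.2.1 i j hij
    have h2 : A j i ≤ 0 := hA.2.1 j i (Ne.symm hij)
    have h0 : 0 ≤ A i j * A j i := by nlinarith
    have hb3 : A i j * A j i ≤ 3 := by
      by_contra hgt
      push_neg at hgt
      simp only [coxExp] at hm
      split_ifs at hm <;> omega
    have hcases : (A i j = 0 ∧ A j i = 0) ∨ (A i j = -1 ∧ A j i = -1) ∨
        (A i j = -1 ∧ A j i = -2) ∨ (A i j = -2 ∧ A j i = -1) ∨
        (A i j = -1 ∧ A j i = -3) ∨ (A i j = -3 ∧ A j i = -1) := by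
      by_cases hc0 : A i j * A j i = 0
      · rcases mul_eq_zero.mp hc0 with h | h
        · exact Or.inl ⟨h, hA.2.2 i j h⟩
        · exact Or.inl ⟨hA.2.2 j i h, h⟩
      · have hia : A i j ≠ 0 := fun h => hc0 (by rw [h]; ring)
        have hib : A j i ≠ 0 := fun h => hc0 (by rw [h]; ring)
        have ha1 : A i j ≤ -1 := by omega
        have hb1 : A j i ≤ -1 := by omega
        have hbb : -3 ≤ A i j := by nlinarith
        have hbb2 : -3 ≤ A j i := by nlinarith
        have hch : A i j = -1 ∨ A i j = -2 ∨ A i j = -3 := by omega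
        rcases hch with h | h | h <;> rw [h] at hb3 h0 <;> omega
    rw [map_mul, map_inv, mul_inv_eq_one]
    rcases hcases with ⟨ha, hb⟩ | ⟨ha, hb⟩ | ⟨ha, hb⟩ | ⟨ha, hb⟩ | ⟨ha, hb⟩ | ⟨ha, hb⟩
    · rw [show coxExp A i j = 2 by norm_num [coxExp, ha, hb]]
      exact braid0 A hA i j ha hb
    · rw [show coxExp A i j = 3 by norm_num [coxExp, ha, hb]]
      exact braid1 A hA i j ha hb
    · rw [show coxExp A i j = 4 by norm_num [coxExp, ha, hb]]
      exact braid2 A hA i j ha hb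
    · rw [show coxExp A i j = 4 by norm_num [coxExp, ha, hb]]
      exact (braid2 A hA j i hb ha).symm
    · rw [show coxExp A i j = 6 by norm_num [coxExp, ha, hb]]
      exact braid3 A hA i j ha hb
    · rw [show coxExp A i j = 6 by norm_num [coxExp, ha, hb]]
      exact (braid3 A hA j i hb ha).symm
  · -- s_i^4
    rw [map_pow, FreeGroup.lift_apply_of, show (4:ℕ) = 2*2 from rfl, pow_mul, tE_sq_sq]
  · -- commutation of squares
    simp only [map_mul, map_inv, map_pow, FreeGroup.lift_apply_of]
    rw [mul_inv_eq_one]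
    ext ⟨l, e⟩ : 1
    simp only [Equiv.Perm.mul_apply, tE_sq_apply, Prod.mk.injEq]
    exact ⟨by trivial, by ring⟩
  · -- conjugation relator
    simp only [map_mul, map_inv, map_pow, map_zpow, FreeGroup.lift_apply_of]
    rw [mul_inv_eq_one]
    ext ⟨l, e⟩ : 1
    simp only [Equiv.Perm.mul_apply, tE_sq_apply, tE_sq_zpow, tE_apply, tE_inv_apply,
      rA_rA A (hA.1 i), Prod.mk.injEq]
    refine ⟨by trivial, ?_⟩
    simp only [rA]
    push_cast
    ring

end TitsAux
theorem stmt13 {ι : Type*} [Fintype ι] [DecidableEq ι]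
    (A : ι → ι → ℤ) (hA : IsGCM A)
    (hsymmetrizable : ∃ d : ι → ℤ, (∀ i, 0 < d i) ∧ ∀ i j, d i * A i j = d j * A j i) :
    letI Wt := PresentedGroup (titsRels A)
    letI Z : Subgroup Wt :=
      Subgroup.closure {x | ∃ i : ι, x = (PresentedGroup.of i) ^ 2}
    (∀ i : ι, orderOf ((PresentedGroup.of i : Wt) ^ 2) = 2) ∧
    Nat.card Z = 2 ^ Fintype.card ι ∧
    ∃ φ : Z ≃* Multiplicative (ι → ZMod 2),
      (∀ i : ι,
        φ ⟨(PresentedGroup.of i) ^ 2, Subgroup.subset_closure ⟨i, rfl⟩⟩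
          = Multiplicative.ofAdd (Pi.single i 1)) ∧
      (∀ (i : ι) (z : Z)
        (hz : (PresentedGroup.of i : Wt) * (z : Wt) * (PresentedGroup.of i : Wt)⁻¹ ∈ Z),
        Multiplicative.toAdd (φ ⟨_, hz⟩)
          = Function.update (Multiplicative.toAdd (φ z)) i
              (Multiplicative.toAdd (φ z) i
                - ∑ j, (A j i : ZMod 2) * Multiplicative.toAdd (φ z) j)) := by
  set Z : Subgroup (PresentedGroup (titsRels A)) :=
    Subgroup.closure {x | ∃ i : ι, x = (PresentedGroup.of i) ^ 2} with hZdef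
  obtain ⟨Φ, hΦof⟩ : ∃ Φ : PresentedGroup (titsRels A) →* Equiv.Perm ((ι → ℤ) × ZMod 2),
      ∀ i : ι, Φ (PresentedGroup.of i) = TitsAux.tE A i (hA.1 i) :=
    ⟨PresentedGroup.toGroup (TitsAux.lift_rels A hA), fun i => PresentedGroup.toGroup.of _⟩
  -- relations in Wt
  have hrel : ∀ r ∈ titsRels A, PresentedGroup.mk (titsRels A) r = 1 := fun r hr =>
    (QuotientGroup.eq_one_iff r).mpr (Subgroup.subset_normalClosure hr)
  have hU2 : ∀ i : ι, ((PresentedGroup.of i : PresentedGroup (titsRels A)) ^ 2) ^ 2 = 1 := by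
    intro i
    have h4 : (PresentedGroup.of i : PresentedGroup (titsRels A)) ^ 4 = 1 := by
      have := hrel _ (Or.inr (Or.inl ⟨i, rfl⟩))
      rw [map_pow] at this
      exact this
    rw [← pow_mul]
    norm_num
    exact h4
  have hUcomm : ∀ i j : ι, (PresentedGroup.of i : PresentedGroup (titsRels A)) ^ 2 * (PresentedGroup.of j) ^ 2
      = (PresentedGroup.of j) ^ 2 * (PresentedGroup.of i) ^ 2 := by
    intro i j
    have := hrel _ (Or.inr (Or.inr (Or.inl ⟨i, j, rfl⟩)))
    simp only [map_mul, map_inv, map_pow] at this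
    exact mul_inv_eq_one.mp this
  have memU : ∀ i : ι, ((PresentedGroup.of i : PresentedGroup (titsRels A)) ^ 2) ∈ Z := fun i =>
    Subgroup.subset_closure ⟨i, rfl⟩
  -- Φ on squares
  have hΦU : ∀ i : ι, Φ ((PresentedGroup.of i : PresentedGroup (titsRels A)) ^ 2) = (TitsAux.tE A i (hA.1 i)) ^ 2 := by
    intro i; rw [map_pow, hΦof]
  -- coefficient extraction
  set cf : PresentedGroup (titsRels A) → ι → ZMod 2 := fun w j => (Φ w (Pi.single j 1, 0)).2 with hcfdef
  have hsum : ∀ (v : ι → ZMod 2) (j : ι),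
      (∑ k, v k * (((Pi.single j 1 : ι → ℤ) k : ℤ) : ZMod 2)) = v j := by
    intro v j
    rw [Finset.sum_eq_single j]
    · simp
    · intro b _ hb; simp [Pi.single_eq_of_ne hb]
    · intro h; exact absurd (Finset.mem_univ j) h
  have hQ : ∀ w ∈ Z, ∃ v : ι → ZMod 2, ∀ p : (ι → ℤ) × ZMod 2,
      Φ w p = (p.1, p.2 + ∑ k, v k * ((p.1 k : ℤ) : ZMod 2)) := by
    intro w hw
    refine Subgroup.closure_induction (fun x hx => ?_) ⟨0, by simp⟩
      (fun x y _ _ hx hy => ?_) (fun x _ hx => ?_) hw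
    · obtain ⟨i, rfl⟩ := hx
      refine ⟨Pi.single i 1, fun p => ?_⟩
      rw [hΦU, TitsAux.tE_sq_apply]
      congr 1
      rw [Finset.sum_eq_single i]
      · simp
      · intro b _ hb; simp [Pi.single_eq_of_ne hb]
      · intro h; exact absurd (Finset.mem_univ i) h
    · obtain ⟨v, hv⟩ := hx; obtain ⟨u, hu⟩ := hy
      refine ⟨v + u, fun p => ?_⟩
      rw [map_mul, Equiv.Perm.mul_apply, hu, hv]
      simp only [Pi.add_apply, add_mul, Finset.sum_add_distrib]
      rw [Prod.mk.injEq]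
      exact ⟨rfl, by ring⟩
    · obtain ⟨v, hv⟩ := hx
      refine ⟨v, fun p => ?_⟩
      rw [map_inv]
      symm
      rw [Equiv.Perm.eq_inv_iff_eq, hv]
      rw [Prod.mk.injEq]
      refine ⟨rfl, ?_⟩
      rw [add_assoc, TitsAux.z2, add_zero]
  have hcfv : ∀ (w : PresentedGroup (titsRels A)) (v : ι → ZMod 2),
      (∀ p : (ι → ℤ) × ZMod 2, Φ w p = (p.1, p.2 + ∑ k, v k * ((p.1 k : ℤ) : ZMod 2))) →
      cf w = v := by
    intro w v hv
    funext j
    rw [hcfdef]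
    simp only [hv (Pi.single j 1, 0), zero_add]
    exact hsum v j
  have hcfU : ∀ i : ι, cf ((PresentedGroup.of i : PresentedGroup (titsRels A)) ^ 2) = Pi.single i 1 := by
    intro i
    funext j
    rw [hcfdef]
    simp only [hΦU, TitsAux.tE_sq_apply, zero_add]
    by_cases hji : j = i
    · subst hji; simp
    · simp [Pi.single_eq_of_ne hji, Pi.single_eq_of_ne (Ne.symm hji)]
  have hcfmul : ∀ x ∈ Z, ∀ y ∈ Z, cf (x * y) = cf x + cf y := by
    intro x hx y hy
    obtain ⟨v, hv⟩ := hQ x hx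
    obtain ⟨u, hu⟩ := hQ y hy
    rw [hcfv x v hv, hcfv y u hu]
    refine hcfv _ _ fun p => ?_
    rw [map_mul, Equiv.Perm.mul_apply, hu, hv]
    simp only [Pi.add_apply, add_mul, Finset.sum_add_distrib]
    rw [Prod.mk.injEq]
    exact ⟨rfl, by ring⟩
  -- χ
  let χ : ↥Z →* Multiplicative (ι → ZMod 2) :=
    MonoidHom.mk' (fun z => Multiplicative.ofAdd (cf z.1))
      (fun z w => by
        show Multiplicative.ofAdd (cf (z.1 * w.1)) = _
        rw [hcfmul _ z.2 _ w.2]; rfl)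
  have hχdef : ∀ z : ↥Z, χ z = Multiplicative.ofAdd (cf z.1) := fun _ => rfl
  -- commutativity of Z
  have hgencomm : ∀ i : ι, ∀ y ∈ Z, Commute ((PresentedGroup.of i : PresentedGroup (titsRels A)) ^ 2) y := by
    intro i y hy
    refine Subgroup.closure_induction (fun a ha => ?_) (Commute.one_right _)
      (fun a b _ _ c1 c2 => c1.mul_right c2) (fun a _ c1 => c1.inv_right) hy
    obtain ⟨j, rfl⟩ := ha
    exact hUcomm i j
  have hZcomm : ∀ x ∈ Z, ∀ y ∈ Z, x * y = y * x := by
    intro x hx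
    have : ∀ x ∈ Z, ∀ y ∈ Z, Commute x y := by
      intro x' hx'
      refine Subgroup.closure_induction (fun a ha => ?_) (fun y hy => (Commute.one_left y))
        (fun a b _ _ c1 c2 y hy => Commute.mul_left (c1 y hy) (c2 y hy))
        (fun a _ c1 y hy => Commute.inv_left (c1 y hy)) hx'
      obtain ⟨i, rfl⟩ := ha
      exact fun y hy => hgencomm i y hy
    exact this x hx
  letI : CommGroup ↥Z := { (inferInstance : Group ↥Z) with mul_comm := fun a b => Subtype.ext (hZcomm a.1 a.2 b.1 b.2) }
  -- the generators inside Z and products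
  let gU : ι → ↥Z := fun i => ⟨(PresentedGroup.of i : PresentedGroup (titsRels A)) ^ 2, memU i⟩
  have hgU2 : ∀ i, gU i ^ 2 = 1 := fun i => Subtype.ext (by
    show ((PresentedGroup.of i : PresentedGroup (titsRels A)) ^ 2) ^ 2 = 1
    exact hU2 i)
  let zprod : (ι → ZMod 2) → ↥Z := fun v => ∏ j, gU j ^ (v j).val
  have hpowmod : ∀ (g : ↥Z), g ^ 2 = 1 → ∀ n : ℕ, g ^ n = g ^ (n % 2) := by
    intro g hg n
    conv_lhs => rw [← Nat.mod_add_div n 2]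
    rw [pow_add, pow_mul, hg, one_pow, mul_one]
  have hzadd : ∀ v u, zprod (v + u) = zprod v * zprod u := by
    intro v u
    rw [show zprod v * zprod u = ∏ j, gU j ^ (v j).val * gU j ^ (u j).val from
      (Finset.prod_mul_distrib).symm]
    refine Finset.prod_congr rfl fun j _ => ?_
    rw [← pow_add, Pi.add_apply, ZMod.val_add]
    exact (hpowmod _ (hgU2 j) _).symm
  have hzsingle : ∀ i : ι, zprod (Pi.single i 1) = gU i := by
    intro i
    refine (Finset.prod_eq_single i ?_ ?_).trans ?_
    · intro b _ hb; rw [Pi.single_eq_of_ne hb]; norm_num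
    · intro h; exact absurd (Finset.mem_univ i) h
    · rw [Pi.single_eq_same, ZMod.val_one, pow_one]
  have hzzero : zprod 0 = 1 := by
    refine Finset.prod_eq_one fun j _ => ?_
    show gU j ^ ((0 : ZMod 2)).val = 1
    rw [ZMod.val_zero, pow_zero]
  have hzprodZ : ∀ z : ↥Z, ∃ v, zprod v = z := by
    rintro ⟨x, hx⟩
    refine Subgroup.closure_induction
      (p := fun g hg => ∃ v, zprod v = ⟨g, hg⟩) (fun a ha => ?_) ⟨0, by
        rw [hzzero]; rfl⟩
      (fun a b hha hhb ha hb => ?_) (fun a hha ha => ?_) hx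
    · obtain ⟨i, rfl⟩ := ha
      exact ⟨Pi.single i 1, by rw [hzsingle]⟩
    · obtain ⟨v, hv⟩ := ha; obtain ⟨u, hu⟩ := hb
      exact ⟨v + u, by rw [hzadd, hv, hu]; rfl⟩
    · obtain ⟨v, hv⟩ := ha
      refine ⟨v, ?_⟩
      have hvv : zprod v * zprod v = 1 := by
        rw [← hzadd, show v + v = 0 from funext fun k => TitsAux.z2 (v k), hzzero]
      have hx2 : a * a = 1 := by
        have := congrArg Subtype.val hvv
        rw [hv] at this
        exact this
      refine Subtype.ext ?_
      have : (zprod v : PresentedGroup (titsRels A)) = a := congrArg Subtype.val hv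
      rw [this]
      exact (inv_eq_of_mul_eq_one_right hx2).symm
  -- χ values
  have hχ_gU : ∀ i, χ (gU i) = Multiplicative.ofAdd (Pi.single i 1) := by
    intro i
    rw [hχdef]
    exact congrArg _ (hcfU i)
  have hχz : ∀ v, χ (zprod v) = Multiplicative.ofAdd v := by
    intro v
    rw [map_prod]
    have key : ∀ j, χ (gU j ^ (v j).val) = Multiplicative.ofAdd (Pi.single j (v j)) := by
      intro j
      rw [map_pow, hχ_gU, ← ofAdd_nsmul]
      congr 1
      rw [← Pi.single_smul]
      congr 1
      rw [nsmul_eq_mul, mul_one, ZMod.natCast_val, ZMod.cast_id]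
    rw [Finset.prod_congr rfl (fun j _ => key j), ← ofAdd_sum, Finset.univ_sum_single]
  have hinj : Function.Injective χ := by
    intro z w h
    obtain ⟨v, rfl⟩ := hzprodZ z
    obtain ⟨u, rfl⟩ := hzprodZ w
    rw [hχz, hχz] at h
    rw [Multiplicative.ofAdd.injective h]
  have hsurj : Function.Surjective χ := fun b =>
    ⟨zprod (Multiplicative.toAdd b), by rw [hχz]; simp⟩
  let φ : ↥Z ≃* Multiplicative (ι → ZMod 2) := MulEquiv.ofBijective χ ⟨hinj, hsurj⟩
  have hφdef : ∀ z : ↥Z, φ z = Multiplicative.ofAdd (cf z.1) := fun _ => rfl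
  refine ⟨?_, ?_, φ, ?_, ?_⟩
  · -- order
    intro i
    refine orderOf_eq_prime (hU2 i) ?_
    intro h
    have h1 := hcfU i
    rw [h] at h1
    have h2 := congrFun h1 i
    rw [hcfdef] at h2
    simp only [map_one, Equiv.Perm.one_apply, Pi.single_eq_same] at h2
    exact zero_ne_one h2
  · -- cardinality
    rw [Nat.card_congr φ.toEquiv, Nat.card_congr Multiplicative.toAdd, Nat.card_pi]
    simp [Nat.card_zmod]
  · -- value on generators
    intro i
    rw [hφdef]
    exact congrArg _ (hcfU i)
  · -- conjugation action
    intro i z hz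
    obtain ⟨v, hv⟩ := hQ z.1 z.2
    have hcz : cf z.1 = v := hcfv _ _ hv
    rw [hφdef, hφdef, toAdd_ofAdd, toAdd_ofAdd, hcz]
    have hconj : cf ((PresentedGroup.of i : PresentedGroup (titsRels A)) * z.1 * (PresentedGroup.of i : PresentedGroup (titsRels A))⁻¹)
        = fun j => ∑ k, v k * (((TitsAux.rA A i (Pi.single j 1)) k : ℤ) : ZMod 2) := by
      funext j
      rw [hcfdef]
      simp only [map_mul, map_inv, Equiv.Perm.mul_apply, hΦof, TitsAux.tE_inv_apply,
        TitsAux.tE_apply, hv, TitsAux.rA_rA A (hA.1 i)]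
      ring
    rw [hconj]
    funext j
    by_cases hji : j = i
    · subst hji
      rw [Function.update_self]
      have harg : ∀ k, (TitsAux.rA A j (Pi.single j 1)) k = (Pi.single j 1 : ι → ℤ) k - A k j := by
        intro k
        simp [TitsAux.rA, Pi.single_eq_same]
      simp only [harg]
      push_cast
      rw [show (∑ k, v k * (((Pi.single j 1 : ι → ℤ) k : ZMod 2) - (A k j : ZMod 2)))
          = (∑ k, v k * ((Pi.single j 1 : ι → ℤ) k : ZMod 2))
            - ∑ k, (A k j : ZMod 2) * v k from by
        rw [← Finset.sum_sub_distrib]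
        exact Finset.sum_congr rfl fun k _ => by ring]
      rw [hsum v j]
    · rw [Function.update_of_ne hji]
      have harg : ∀ k, (TitsAux.rA A i (Pi.single j 1)) k = (Pi.single j 1 : ι → ℤ) k := by
        intro k
        simp [TitsAux.rA, Pi.single_eq_of_ne (Ne.symm hji)]
      simp only [harg]
      exact hsum v j
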